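/- (Two-variable case.) Let 𝒜₀, 𝒜₁, 𝒜₂ be abelian categories with complete cotorsion pairs (𝒟ᵢ, ℰᵢ), and let F : 𝒜₁ × 𝒜₂ → 𝒜₀ be a two-variable left adjoint with right adjoints G¹, G². Assume: (0a) for every D₂ ∈ 𝒟₂ the class 𝒟₁ is F(−, D₂)-right split, and for every D₁ ∈ 𝒟₁ the class 𝒟₂ is F(D₁, −)-right split; (0b) F(D₁, D₂) ∈ 𝒟₀ whenever D₁ ∈ 𝒟₁ and D₂ ∈ 𝒟₂. Then for all short exact sequences 0 → Aᵢ →^{fᵢ} Bᵢ → Dᵢ → 0 with Dᵢ ∈ 𝒟ᵢ (i = 1, 2), the pushout product □_F(f₁, f₂) is a monomorphism and its cokernel is isomorphic to F(D₁, D₂). -/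
import Mathlib


open CategoryTheory CategoryTheory.Limits CategoryTheory.Abelian Opposite

universe w₀ w₁ w₂ v₀ v₁ v₂ u₀ u₁ u₂

/-- `(𝒟, ℰ)` is a cotorsion pair on the abelian category `C`. -/
def IsCotorsionPair {C : Type u₀} [Category.{v₀} C] [Abelian C] [HasExt.{w₀} C]
    (𝒟 ℰ : Set C) : Prop :=
  (∀ X : C, X ∈ 𝒟 ↔ ∀ Y ∈ ℰ, Subsingleton (Ext X Y 1)) ∧
  (∀ Y : C, Y ∈ ℰ ↔ ∀ X ∈ 𝒟, Subsingleton (Ext X Y 1))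

/-- The cotorsion pair `(𝒟, ℰ)` is complete: every object `X` fits in short exact
sequences `0 → X → E → D → 0` and `0 → E′ → D′ → X → 0` with `D, D′ ∈ 𝒟`, `E, E′ ∈ ℰ`. -/
def CPIsComplete {C : Type u₀} [Category.{v₀} C] [Abelian C] (𝒟 ℰ : Set C) : Prop :=
  (∀ X : C, ∃ (E D : C) (i : X ⟶ E) (p : E ⟶ D) (w : i ≫ p = 0),
    (ShortComplex.mk i p w).ShortExact ∧ E ∈ ℰ ∧ D ∈ 𝒟) ∧
  (∀ X : C, ∃ (E D : C) (i : E ⟶ D) (p : D ⟶ X) (w : i ≫ p = 0),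
    (ShortComplex.mk i p w).ShortExact ∧ E ∈ ℰ ∧ D ∈ 𝒟)

/-- A class `𝒮` is `F`-right split if every short exact sequence `0 → X → Y → S → 0` with
`S ∈ 𝒮` remains short exact after applying `F`. -/
def RightSplit {A : Type u₁} [Category.{v₁} A] [Abelian A]
    {B : Type u₂} [Category.{v₂} B] [Abelian B]
    (F : A ⥤ B) [F.PreservesZeroMorphisms] (𝒮 : Set A) : Prop :=
  ∀ S : ShortComplex A, S.ShortExact → S.X₃ ∈ 𝒮 → (S.map F).ShortExact

open scoped Pseudoelement

section Aux

variable {A : Type u₀} [Category.{v₀} A] [Abelian A]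

/-- Auxiliary: a short exact sequence stays exact (at the middle and right) after applying
a colimit-preserving functor. -/
private theorem aux_map_exact {C : Type u₁} [Category.{v₁} C] [Abelian C]
    {D : Type u₂} [Category.{v₂} D] [Abelian D]
    {X Y Z : C} {f : X ⟶ Y} {g : Y ⟶ Z} {w : f ≫ g = 0}
    (h : (ShortComplex.mk f g w).ShortExact) (H : C ⥤ D) [H.PreservesZeroMorphisms]
    [PreservesColimitsOfSize.{0, 0} H] {w' : H.map f ≫ H.map g = 0} :
    (ShortComplex.mk (H.map f) (H.map g) w').Exact :=
  h.exact.map_of_epi_of_preservesCokernel H h.epi_g inferInstance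

/-- Auxiliary diagram chase: under suitable exactness/mono conditions, the canonical map
out of a pushout kills only zero (on pseudoelements). -/
private theorem aux_mono_pushout_desc
    {X Y₁ Y₂ W Z Z' V V' : A}
    (a : X ⟶ Y₁) (b : X ⟶ Y₂) (k : Y₁ ⟶ W) (l : Y₂ ⟶ W) (wkl : a ≫ k = b ≫ l)
    [Mono k]
    (r : Y₁ ⟶ Z) (wr : a ≫ r = 0) (hra : (ShortComplex.mk a r wr).Exact) [Epi r]
    (ι : Z ⟶ Z') [Mono ι] (m : W ⟶ Z') (hsq1 : r ≫ ι = k ≫ m) (hlm : l ≫ m = 0)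
    (σ : Y₂ ⟶ V) (wbσ : b ≫ σ = 0) (hbσ : (ShortComplex.mk b σ wbσ).Exact)
    (n : V ⟶ V') [Mono n] (c : W ⟶ V') (hsq2 : l ≫ c = σ ≫ n) :
    ∀ x : Pseudoelement (pushout a b), pushout.desc k l wkl x = 0 → x = 0 := by
  intro x hx
  have wρ : a ≫ r = b ≫ (0 : Y₂ ⟶ Z) := by rw [wr, comp_zero]
  have hinlρ : pushout.inl a b ≫ pushout.desc r 0 wρ = r := pushout.inl_desc _ _ _
  have hinrρ : pushout.inr a b ≫ pushout.desc r 0 wρ = 0 := pushout.inr_desc _ _ _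
  haveI : Epi (pushout.desc r 0 wρ) := epi_of_epi_fac hinlρ
  have hcolim : IsColimit (CokernelCofork.ofπ (pushout.desc r 0 wρ) hinrρ) := by
    refine CokernelCofork.IsColimit.ofπ' _ hinrρ (fun {T} t ht => ?_)
    have hat : a ≫ pushout.inl a b ≫ t = 0 := by
      rw [← Category.assoc, pushout.condition, Category.assoc, ht, comp_zero]
    refine ⟨hra.desc (pushout.inl a b ≫ t) hat, ?_⟩
    apply pushout.hom_ext
    · rw [← Category.assoc, hinlρ]
      exact hra.g_desc _ _
    · rw [← Category.assoc, hinrρ, zero_comp, ht]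
  have hexρ : (ShortComplex.mk (pushout.inr a b) (pushout.desc r 0 wρ) hinrρ).Exact :=
    ShortComplex.exact_of_g_is_cokernel _ hcolim
  have hρι : pushout.desc r 0 wρ ≫ ι = pushout.desc k l wkl ≫ m := by
    apply pushout.hom_ext
    · rw [← Category.assoc, hinlρ, ← Category.assoc, pushout.inl_desc]
      exact hsq1
    · rw [← Category.assoc, hinrρ, zero_comp, ← Category.assoc, pushout.inr_desc, hlm]
  have h1 : ι (pushout.desc r 0 wρ x) = 0 := by
    rw [← Pseudoelement.comp_apply, hρι, Pseudoelement.comp_apply, hx,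
      Pseudoelement.apply_zero]
  have h2 : pushout.desc r 0 wρ x = 0 :=
    Pseudoelement.zero_of_map_zero ι (Pseudoelement.pseudo_injective_of_mono ι) _ h1
  obtain ⟨y, hy⟩ := Pseudoelement.pseudo_exact_of_exact hexρ x h2
  have h4 : l y = 0 := by
    have h := congrArg (Pseudoelement.pseudoApply (pushout.desc k l wkl)) hy
    rw [← Pseudoelement.comp_apply, pushout.inr_desc, hx] at h
    exact h
  have h5 : σ y = 0 := by
    apply Pseudoelement.zero_of_map_zero n (Pseudoelement.pseudo_injective_of_mono n)
    rw [← Pseudoelement.comp_apply, ← hsq2, Pseudoelement.comp_apply, h4,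
      Pseudoelement.apply_zero]
  obtain ⟨z, hz⟩ := Pseudoelement.pseudo_exact_of_exact hbσ y h5
  have h7 : x = pushout.inl a b (a z) := by
    rw [← hy, ← hz, ← Pseudoelement.comp_apply, ← pushout.condition,
      Pseudoelement.comp_apply]
  have h8 : k (a z) = 0 := by
    have h : (pushout.inl a b ≫ pushout.desc k l wkl) (a z) = 0 := by
      rw [Pseudoelement.comp_apply, ← h7, hx]
    rwa [pushout.inl_desc] at h
  have h9 : a z = 0 :=
    Pseudoelement.zero_of_map_zero k (Pseudoelement.pseudo_injective_of_mono k) _ h8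
  rw [h7, h9, Pseudoelement.apply_zero]

/-- Auxiliary: transferring monomorphy along a comparison of pushout-products. -/
private theorem aux_mono_transfer
    {Pt P Wt W T : A} (μ : Pt ⟶ P) [Epi μ] (boxt : Pt ⟶ Wt) (box : P ⟶ W)
    (v : Wt ⟶ W) (hcomm : μ ≫ box = boxt ≫ v)
    (hker : ∀ x : Pt, boxt x = 0 → x = 0)
    (e : T ⟶ Wt) (u : T ⟶ Pt) (hu : u ≫ boxt = e) (huμ : u ≫ μ = 0)
    (hex : ∀ w : Wt, v w = 0 → ∃ t : T, e t = w) :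
    Mono box := by
  apply Pseudoelement.mono_of_zero_of_map_zero
  intro x hx
  obtain ⟨xt, hxt⟩ := Pseudoelement.pseudo_surjective_of_epi μ x
  have h2 : v (boxt xt) = 0 := by
    rw [← Pseudoelement.comp_apply, ← hcomm, Pseudoelement.comp_apply, hxt, hx]
  obtain ⟨t, ht⟩ := hex (boxt xt) h2
  have h3 : boxt xt = boxt (u t) := by
    rw [← Pseudoelement.comp_apply, hu, ht]
  obtain ⟨z, hz0, hzg⟩ := Pseudoelement.sub_of_eq_image boxt xt (u t) h3
  have hμu : μ (u t) = 0 := by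
    rw [← Pseudoelement.comp_apply, huμ, Pseudoelement.zero_apply]
  have hμz : μ z = x := by rw [hzg _ μ hμu, hxt]
  rw [← hμz, hker z hz0, Pseudoelement.apply_zero]

end Aux

/-- Two-variable case of the generalization of Hovey's criterion: for a two-variable left
adjoint `F` satisfying the splitting conditions, the pushout product of monomorphisms with
cokernels in the left classes is a monomorphism with cokernel `F(D₁, D₂)`. -/
theorem pushout_product_mono_and_cokernel
    {A₁ : Type u₁} [Category.{v₁} A₁] [Abelian A₁] [HasExt.{w₁} A₁]
    {A₂ : Type u₂} [Category.{v₂} A₂] [Abelian A₂] [HasExt.{w₂} A₂]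
    {A₀ : Type u₀} [Category.{v₀} A₀] [Abelian A₀] [HasExt.{w₀} A₀]
    (F : A₁ ⥤ A₂ ⥤ A₀)
    [∀ X₁ : A₁, (F.obj X₁).Additive] [∀ X₂ : A₂, (F.flip.obj X₂).Additive]
    (G₁ : A₂ᵒᵖ ⥤ A₀ ⥤ A₁) (G₂ : A₁ᵒᵖ ⥤ A₀ ⥤ A₂)
    (adj₁ : ∀ X₂ : A₂, F.flip.obj X₂ ⊣ G₁.obj (op X₂))
    (adj₂ : ∀ X₁ : A₁, F.obj X₁ ⊣ G₂.obj (op X₁))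
    (𝒟₀ ℰ₀ : Set A₀) (𝒟₁ ℰ₁ : Set A₁) (𝒟₂ ℰ₂ : Set A₂)
    (h₀ : IsCotorsionPair 𝒟₀ ℰ₀) (h₁ : IsCotorsionPair 𝒟₁ ℰ₁)
    (h₂ : IsCotorsionPair 𝒟₂ ℰ₂)
    (h₀c : CPIsComplete 𝒟₀ ℰ₀) (h₁c : CPIsComplete 𝒟₁ ℰ₁) (h₂c : CPIsComplete 𝒟₂ ℰ₂)
    (hsplit₁ : ∀ D₂ ∈ 𝒟₂, RightSplit (F.flip.obj D₂) 𝒟₁)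
    (hsplit₂ : ∀ D₁ ∈ 𝒟₁, RightSplit (F.obj D₁) 𝒟₂)
    (hobj : ∀ D₁ ∈ 𝒟₁, ∀ D₂ ∈ 𝒟₂, (F.obj D₁).obj D₂ ∈ 𝒟₀)
    {A₁' B₁ D₁ : A₁} (f₁ : A₁' ⟶ B₁) (p₁ : B₁ ⟶ D₁) (w₁ : f₁ ≫ p₁ = 0)
    (hS₁ : (ShortComplex.mk f₁ p₁ w₁).ShortExact) (hD₁ : D₁ ∈ 𝒟₁)
    {A₂' B₂ D₂ : A₂} (f₂ : A₂' ⟶ B₂) (p₂ : B₂ ⟶ D₂) (w₂ : f₂ ≫ p₂ = 0)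
    (hS₂ : (ShortComplex.mk f₂ p₂ w₂).ShortExact) (hD₂ : D₂ ∈ 𝒟₂) :
    Mono (pushout.desc ((F.map f₁).app B₂) ((F.obj B₁).map f₂)
        ((F.map f₁).naturality f₂)) ∧
    Nonempty (cokernel (pushout.desc ((F.map f₁).app B₂) ((F.obj B₁).map f₂)
        ((F.map f₁).naturality f₂)) ≅ (F.obj D₁).obj D₂) := by
  haveI := hS₁.mono_f
  haveI := hS₁.epi_g
  haveI := hS₂.mono_f
  haveI := hS₂.epi_g
  haveI : ∀ X₁ : A₁, PreservesColimitsOfSize.{0, 0} (F.obj X₁) := fun X₁ =>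
    (adj₂ X₁).leftAdjoint_preservesColimits
  haveI : ∀ X₂ : A₂, PreservesColimitsOfSize.{0, 0} (F.flip.obj X₂) := fun X₂ =>
    (adj₁ X₂).leftAdjoint_preservesColimits
  constructor
  · -- the mono part
    obtain ⟨E, D', e, q, we, hSE, hE, hD'⟩ := h₂c.2 B₂
    haveI := hSE.mono_f
    haveI := hSE.epi_g
    -- the pulled-back second sequence `0 → pullback f₂ q → D' → D₂ → 0`
    have wt : pullback.snd f₂ q ≫ q ≫ p₂ = 0 := by
      rw [← Category.assoc, ← pullback.condition, Category.assoc, w₂, comp_zero]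
    have hexD' : (ShortComplex.mk (pullback.snd f₂ q) (q ≫ p₂) wt).Exact := by
      apply Pseudoelement.exact_of_pseudo_exact
      intro u hu
      have h1 : p₂ (q u) = 0 := by
        rw [← Pseudoelement.comp_apply]; exact hu
      obtain ⟨s, hs⟩ := Pseudoelement.pseudo_exact_of_exact hS₂.exact (q u) h1
      obtain ⟨t, ht1, ht2⟩ := Pseudoelement.pseudo_pullback (f := f₂) (g := q) hs
      exact ⟨t, ht2⟩
    haveI : Epi (q ≫ p₂) := epi_comp q p₂
    have hSt : (ShortComplex.mk (pullback.snd f₂ q) (q ≫ p₂) wt).ShortExact := ⟨hexD'⟩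
    -- monomorphisms coming from the splitting hypotheses
    haveI hM1 : Mono ((F.map f₁).app D₂) := (hsplit₁ D₂ hD₂ _ hS₁ hD₁).mono_f
    haveI hM2 : Mono ((F.map f₁).app D') := (hsplit₁ D' hD' _ hS₁ hD₁).mono_f
    haveI hM3 : Mono ((F.obj D₁).map (pullback.snd f₂ q)) :=
      (hsplit₂ D₁ hD₁ _ hSt hD₂).mono_f
    -- exactness after applying the functors
    have wQ1 : (F.map f₁).app (pullback f₂ q) ≫ (F.map p₁).app (pullback f₂ q) = 0 := by
      have h : (F.flip.obj (pullback f₂ q)).map f₁ ≫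
          (F.flip.obj (pullback f₂ q)).map p₁ = 0 := by
        rw [← Functor.map_comp, w₁, Functor.map_zero]
      exact h
    have EX1 : (ShortComplex.mk ((F.map f₁).app (pullback f₂ q))
        ((F.map p₁).app (pullback f₂ q)) wQ1).Exact :=
      aux_map_exact hS₁ (F.flip.obj (pullback f₂ q))
    have wE : (F.obj B₁).map e ≫ (F.obj B₁).map q = 0 := by
      rw [← Functor.map_comp, we, Functor.map_zero]
    have EX2 : (ShortComplex.mk ((F.obj B₁).map e) ((F.obj B₁).map q) wE).Exact :=
      aux_map_exact hSE (F.obj B₁)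
    have wr : (F.obj A₁').map (pullback.snd f₂ q) ≫ (F.obj A₁').map (q ≫ p₂) = 0 := by
      rw [← Functor.map_comp, wt, Functor.map_zero]
    have EX4 : (ShortComplex.mk ((F.obj A₁').map (pullback.snd f₂ q))
        ((F.obj A₁').map (q ≫ p₂)) wr).Exact :=
      aux_map_exact hSt (F.obj A₁')
    haveI : Epi ((F.obj A₁').map (q ≫ p₂)) := (F.obj A₁').map_epi _
    have hlm : (F.obj B₁).map (pullback.snd f₂ q) ≫ (F.obj B₁).map (q ≫ p₂) = 0 := by
      rw [← Functor.map_comp, wt, Functor.map_zero]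
    -- the key chase for the pulled-back pushout product
    have hker := aux_mono_pushout_desc
      ((F.obj A₁').map (pullback.snd f₂ q)) ((F.map f₁).app (pullback f₂ q))
      ((F.map f₁).app D') ((F.obj B₁).map (pullback.snd f₂ q))
      ((F.map f₁).naturality (pullback.snd f₂ q))
      ((F.obj A₁').map (q ≫ p₂)) wr EX4
      ((F.map f₁).app D₂) ((F.obj B₁).map (q ≫ p₂))
      ((F.map f₁).naturality (q ≫ p₂)) hlm
      ((F.map p₁).app (pullback f₂ q)) wQ1 EX1
      ((F.obj D₁).map (pullback.snd f₂ q)) ((F.map p₁).app D')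
      ((F.map p₁).naturality (pullback.snd f₂ q))
    -- the canonical map `E ⟶ pullback f₂ q`
    have we'' : (0 : E ⟶ A₂') ≫ f₂ = e ≫ q := by rw [zero_comp, we]
    -- the comparison map between the two pushouts
    have eqμ1 : (F.obj A₁').map (pullback.snd f₂ q) ≫ (F.obj A₁').map q =
        (F.obj A₁').map (pullback.fst f₂ q) ≫ (F.obj A₁').map f₂ := by
      rw [← Functor.map_comp, ← Functor.map_comp, pullback.condition]
    have eqμ2 : (F.map f₁).app (pullback f₂ q) ≫ (F.obj B₁).map (pullback.fst f₂ q) =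
        (F.obj A₁').map (pullback.fst f₂ q) ≫ (F.map f₁).app A₂' :=
      ((F.map f₁).naturality (pullback.fst f₂ q)).symm
    set μ := pushout.map ((F.obj A₁').map (pullback.snd f₂ q))
      ((F.map f₁).app (pullback f₂ q)) ((F.obj A₁').map f₂) ((F.map f₁).app A₂')
      ((F.obj A₁').map q) ((F.obj B₁).map (pullback.fst f₂ q))
      ((F.obj A₁').map (pullback.fst f₂ q)) eqμ1 eqμ2 with hμdef
    have hμl : pushout.inl ((F.obj A₁').map (pullback.snd f₂ q))
          ((F.map f₁).app (pullback f₂ q)) ≫ μ =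
        (F.obj A₁').map q ≫ pushout.inl ((F.obj A₁').map f₂) ((F.map f₁).app A₂') := by
      rw [hμdef]; exact pushout.inl_desc _ _ _
    have hμr : pushout.inr ((F.obj A₁').map (pullback.snd f₂ q))
          ((F.map f₁).app (pullback f₂ q)) ≫ μ =
        (F.obj B₁).map (pullback.fst f₂ q) ≫
          pushout.inr ((F.obj A₁').map f₂) ((F.map f₁).app A₂') := by
      rw [hμdef]; exact pushout.inr_desc _ _ _
    haveI : Epi ((F.obj A₁').map q) := (F.obj A₁').map_epi q
    haveI : Epi ((F.obj B₁).map (pullback.fst f₂ q)) := (F.obj B₁).map_epi _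
    haveI hμepi : Epi μ := by
      constructor
      intro T g h hw
      apply pushout.hom_ext
      · have h1 : pushout.inl _ _ ≫ μ ≫ g = pushout.inl _ _ ≫ μ ≫ h := by rw [hw]
        rw [← Category.assoc, ← Category.assoc, hμl, Category.assoc, Category.assoc] at h1
        exact (cancel_epi _).1 h1
      · have h1 : pushout.inr _ _ ≫ μ ≫ g = pushout.inr _ _ ≫ μ ≫ h := by rw [hw]
        rw [← Category.assoc, ← Category.assoc, hμr, Category.assoc, Category.assoc] at h1
        exact (cancel_epi _).1 h1
    have hcomm : μ ≫ pushout.desc ((F.map f₁).app B₂) ((F.obj B₁).map f₂)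
          ((F.map f₁).naturality f₂) =
        pushout.desc ((F.map f₁).app D') ((F.obj B₁).map (pullback.snd f₂ q))
          ((F.map f₁).naturality (pullback.snd f₂ q)) ≫ (F.obj B₁).map q := by
      apply pushout.hom_ext
      · rw [← Category.assoc, hμl, Category.assoc,
          pushout.inl_desc ((F.map f₁).app B₂) ((F.obj B₁).map f₂)
            ((F.map f₁).naturality f₂),
          ← Category.assoc,
          pushout.inl_desc ((F.map f₁).app D') ((F.obj B₁).map (pullback.snd f₂ q))
            ((F.map f₁).naturality (pullback.snd f₂ q))]
        exact (F.map f₁).naturality q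
      · rw [← Category.assoc, hμr, Category.assoc,
          pushout.inr_desc ((F.map f₁).app B₂) ((F.obj B₁).map f₂)
            ((F.map f₁).naturality f₂),
          ← Category.assoc,
          pushout.inr_desc ((F.map f₁).app D') ((F.obj B₁).map (pullback.snd f₂ q))
            ((F.map f₁).naturality (pullback.snd f₂ q)),
          ← Functor.map_comp, ← Functor.map_comp, pullback.condition]
    refine aux_mono_transfer μ
      (pushout.desc ((F.map f₁).app D') ((F.obj B₁).map (pullback.snd f₂ q))
        ((F.map f₁).naturality (pullback.snd f₂ q)))
      _ ((F.obj B₁).map q) hcomm hker ((F.obj B₁).map e)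
      ((F.obj B₁).map (pullback.lift (0 : E ⟶ A₂') e we'') ≫ pushout.inr _ _) ?_ ?_ ?_
    · rw [Category.assoc, pushout.inr_desc, ← Functor.map_comp, pullback.lift_snd]
    · rw [Category.assoc, hμr, ← Category.assoc, ← Functor.map_comp, pullback.lift_fst,
        Functor.map_zero, zero_comp]
    · exact fun w hw => Pseudoelement.pseudo_exact_of_exact EX2 w hw
  · -- the cokernel part
    have wB : (F.map f₁).app B₂ ≫ (F.map p₁).app B₂ = 0 := by
      have h : (F.flip.obj B₂).map f₁ ≫ (F.flip.obj B₂).map p₁ = 0 := by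
        rw [← Functor.map_comp, w₁, Functor.map_zero]
      exact h
    have EXB : (ShortComplex.mk ((F.map f₁).app B₂) ((F.map p₁).app B₂) wB).Exact :=
      aux_map_exact hS₁ (F.flip.obj B₂)
    have wD : (F.obj D₁).map f₂ ≫ (F.obj D₁).map p₂ = 0 := by
      rw [← Functor.map_comp, w₂, Functor.map_zero]
    have EXD : (ShortComplex.mk ((F.obj D₁).map f₂) ((F.obj D₁).map p₂) wD).Exact :=
      aux_map_exact hS₂ (F.obj D₁)
    haveI hep1 : Epi ((F.map p₁).app B₂) := (F.flip.obj B₂).map_epi p₁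
    haveI hep1' : Epi ((F.map p₁).app A₂') := (F.flip.obj A₂').map_epi p₁
    haveI hep2 : Epi ((F.obj D₁).map p₂) := (F.obj D₁).map_epi p₂
    have wπ : pushout.desc ((F.map f₁).app B₂) ((F.obj B₁).map f₂)
        ((F.map f₁).naturality f₂) ≫ ((F.map p₁).app B₂ ≫ (F.obj D₁).map p₂) = 0 := by
      apply pushout.hom_ext
      · rw [comp_zero, ← Category.assoc, pushout.inl_desc, ← Category.assoc, wB, zero_comp]
      · rw [comp_zero, ← Category.assoc, pushout.inr_desc, ← Category.assoc,
          (F.map p₁).naturality f₂, Category.assoc, ← Functor.map_comp, w₂,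
          Functor.map_zero, comp_zero]
    have hcolim : IsColimit (CokernelCofork.ofπ ((F.map p₁).app B₂ ≫ (F.obj D₁).map p₂)
        wπ) := by
      refine CokernelCofork.IsColimit.ofπ' _ wπ (fun {T} k hk => ?_)
      have hk1 : (F.map f₁).app B₂ ≫ k = 0 := by
        rw [← pushout.inl_desc ((F.map f₁).app B₂) ((F.obj B₁).map f₂)
          ((F.map f₁).naturality f₂), Category.assoc, hk, comp_zero]
      have hgd : (F.map p₁).app B₂ ≫ EXB.desc k hk1 = k := EXB.g_desc k hk1
      have hu0 : (F.obj D₁).map f₂ ≫ EXB.desc k hk1 = 0 := by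
        apply zero_of_epi_comp ((F.map p₁).app A₂')
        rw [← Category.assoc, ← (F.map p₁).naturality f₂, Category.assoc, hgd,
          ← pushout.inr_desc ((F.map f₁).app B₂) ((F.obj B₁).map f₂)
            ((F.map f₁).naturality f₂), Category.assoc, hk, comp_zero]
      refine ⟨EXD.desc (EXB.desc k hk1) hu0, ?_⟩
      rw [Category.assoc, EXD.g_desc, hgd]
    exact ⟨IsColimit.coconePointUniqueUpToIso
      (cokernelIsCokernel (pushout.desc ((F.map f₁).app B₂) ((F.obj B₁).map f₂)
        ((F.map f₁).naturality f₂))) hcolim⟩
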